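/- Assume d ≥ 2. For every δ > 0, ‖g(δ) − c · v₁‖ ≤ 3·q(δ). -/

import Mathlib

open MeasureTheory Metric Filter
open scoped RealInnerProductSpace ENNReal

/-- sign(t) = 1 if t > 0 and -1 otherwise. -/
noncomputable def sgn (t : ℝ) : ℝ := if 0 < t then 1 else -1

/-- The uniform probability measure on the unit sphere of `EuclideanSpace ℝ (Fin d)`:
the (d-1)-dimensional Hausdorff measure restricted to the sphere, normalized to mass 1. -/
noncomputable def sphereUniform (d : ℕ) : Measure (EuclideanSpace ℝ (Fin d)) :=
  (μH[(d : ℝ) - 1] (Metric.sphere (0 : EuclideanSpace ℝ (Fin d)) 1))⁻¹ •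
    (μH[(d : ℝ) - 1]).restrict (Metric.sphere (0 : EuclideanSpace ℝ (Fin d)) 1)

/-- The population gradient-direction estimate
`g(δ) = ∫_S sign(S (x_t + δ u)) · u dσ(u)`. -/
noncomputable def gEst (d : ℕ) (S : EuclideanSpace ℝ (Fin d) → ℝ)
    (xt : EuclideanSpace ℝ (Fin d)) (δ : ℝ) : EuclideanSpace ℝ (Fin d) :=
  ∫ u, sgn (S (xt + δ • u)) • u ∂(sphereUniform d)

section TaylorAux

variable {E : Type*} [NormedAddCommGroup E] [InnerProductSpace ℝ E] [CompleteSpace E]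

lemma hasDerivAt_comp_line (S : E → ℝ) (hS : Differentiable ℝ S) (x v : E) (t : ℝ) :
    HasDerivAt (fun t : ℝ => S (x + t • v)) ⟪gradient S (x + t • v), v⟫ t := by
  have hγ : HasDerivAt (fun t : ℝ => x + t • v) v t := by
    simpa using ((hasDerivAt_id t).smul_const v).const_add x
  have hf : HasFDerivAt S (InnerProductSpace.toDual ℝ E (gradient S (x + t • v)))
      (x + t • v) := hasGradientAt_iff_hasFDerivAt.mp ((hS _).hasGradientAt)
  have := hf.comp_hasDerivAt t hγ
  rw [InnerProductSpace.toDual_apply_apply] at this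
  exact this

lemma descent_aux (S : E → ℝ) (hS : Differentiable ℝ S) (L : ℝ)
    (hLip : ∀ x y : E, ‖gradient S x - gradient S y‖ ≤ L * ‖x - y‖) (x y : E) :
    S y - S x - ⟪gradient S x, y - x⟫ ≤ L / 2 * ‖y - x‖ ^ 2 := by
  set v := y - x with hv
  set φ : ℝ → ℝ := fun t => L / 2 * ‖v‖ ^ 2 * t ^ 2 + t * ⟪gradient S x, v⟫ - S (x + t • v)
    with hφ
  have hderiv : ∀ t : ℝ, HasDerivAt φ
      (L / 2 * ‖v‖ ^ 2 * (2 * t) + ⟪gradient S x, v⟫ - ⟪gradient S (x + t • v), v⟫) t := by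
    intro t
    have h1 := (hasDerivAt_pow 2 t).const_mul (L / 2 * ‖v‖ ^ 2)
    have h2 := (hasDerivAt_id t).mul_const ⟪gradient S x, v⟫
    have h3 := hasDerivAt_comp_line S hS x v t
    convert (h1.add h2).sub h3 using 1
    · rfl
    · rfl
    · rfl
    · simp
  have hmono : MonotoneOn φ (Set.Icc 0 1) := by
    apply monotoneOn_of_deriv_nonneg (convex_Icc 0 1)
    · exact fun t _ => ((hderiv t).continuousAt).continuousWithinAt
    · exact fun t _ => ((hderiv t).differentiableAt).differentiableWithinAt
    · intro t ht
      rw [interior_Icc] at ht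
      rw [(hderiv t).deriv]
      have hb : ⟪gradient S (x + t • v), v⟫ - ⟪gradient S x, v⟫ ≤ L * t * ‖v‖ ^ 2 := by
        rw [← inner_sub_left]
        calc ⟪gradient S (x + t • v) - gradient S x, v⟫
            ≤ ‖gradient S (x + t • v) - gradient S x‖ * ‖v‖ := real_inner_le_norm _ _
          _ ≤ L * ‖(x + t • v) - x‖ * ‖v‖ :=
              mul_le_mul_of_nonneg_right (hLip _ _) (norm_nonneg _)
          _ = L * t * ‖v‖ ^ 2 := by
              rw [add_sub_cancel_left, norm_smul, Real.norm_eq_abs, abs_of_pos ht.1]; ring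
      nlinarith [ht.1.le]
  have h01 := hmono (Set.left_mem_Icc.mpr zero_le_one) (Set.right_mem_Icc.mpr zero_le_one)
    zero_le_one
  have h0 : φ 0 = -S x := by simp [hφ]
  have h1 : φ 1 = L / 2 * ‖v‖ ^ 2 + ⟪gradient S x, v⟫ - S y := by
    simp [hφ, hv]
  rw [h0, h1] at h01
  linarith

lemma gradient_neg_eq (S : E → ℝ) (hS : Differentiable ℝ S) (z : E) :
    gradient (fun w => -S w) z = -gradient S z := by
  have h2 : HasFDerivAt S (InnerProductSpace.toDual ℝ E (gradient S z)) z :=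
    hasGradientAt_iff_hasFDerivAt.mp ((hS z).hasGradientAt)
  have h4 : HasGradientAt (fun w => -S w) (-gradient S z) z := by
    rw [hasGradientAt_iff_hasFDerivAt, map_neg]
    exact h2.neg
  exact h4.gradient

lemma taylor_abs (S : E → ℝ) (hS : Differentiable ℝ S) (L : ℝ)
    (hLip : ∀ x y : E, ‖gradient S x - gradient S y‖ ≤ L * ‖x - y‖) (x y : E) :
    |S y - S x - ⟪gradient S x, y - x⟫| ≤ L / 2 * ‖y - x‖ ^ 2 := by
  rw [abs_le]
  constructor
  · have hLip' : ∀ a b : E, ‖gradient (fun w => -S w) a - gradient (fun w => -S w) b‖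
        ≤ L * ‖a - b‖ := by
      intro a b
      rw [gradient_neg_eq S hS, gradient_neg_eq S hS, neg_sub_neg, norm_sub_rev]
      exact hLip a b
    have := descent_aux (fun w => -S w) hS.neg L hLip' x y
    rw [gradient_neg_eq S hS, inner_neg_left] at this
    linarith
  · linarith [descent_aux S hS L hLip x y]

lemma sgn_agree (S : E → ℝ) (hS : Differentiable ℝ S) (L : ℝ)
    (hLip : ∀ x y : E, ‖gradient S x - gradient S y‖ ≤ L * ‖x - y‖)
    (xt : E) (hxt : S xt = 0) (u : E) (hu1 : ‖u‖ = 1) (δ : ℝ) (hδ : 0 < δ)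
    (hgt : L * δ / 2 < |⟪gradient S xt, u⟫|) :
    sgn (S (xt + δ • u)) = sgn ⟪gradient S xt, u⟫ := by
  have htay := taylor_abs S hS L hLip xt (xt + δ • u)
  rw [hxt, add_sub_cancel_left, real_inner_smul_right, norm_smul,
    Real.norm_eq_abs, abs_of_pos hδ, hu1, mul_one, sub_zero] at htay
  have htl := (abs_le.mp htay).1
  have htu := (abs_le.mp htay).2
  rcases le_or_gt ⟪gradient S xt, u⟫ 0 with hle | hpos
  · have habs : L * δ / 2 < -⟪gradient S xt, u⟫ := by rwa [abs_of_nonpos hle] at hgt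
    have hmul := mul_lt_mul_of_pos_left habs hδ
    have key1 : δ * (L * δ / 2) = L / 2 * δ ^ 2 := by ring
    have key2 : δ * -⟪gradient S xt, u⟫ = -(δ * ⟪gradient S xt, u⟫) := by ring
    have hS' : ¬ 0 < S (xt + δ • u) := by push_neg; linarith
    simp only [sgn, if_neg hS', if_neg (not_lt.mpr hle)]
  · have habs : L * δ / 2 < ⟪gradient S xt, u⟫ := by rwa [abs_of_pos hpos] at hgt
    have hmul := mul_lt_mul_of_pos_left habs hδ
    have key1 : δ * (L * δ / 2) = L / 2 * δ ^ 2 := by ring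
    have hS' : 0 < S (xt + δ • u) := by linarith
    simp only [sgn, if_pos hS', if_pos hpos]

end TaylorAux

set_option maxHeartbeats 1000000

/-- For `d ≥ 2` and every `δ > 0`, `‖g(δ) − c·v₁‖ ≤ 3·q(δ)`. -/
theorem stmt_3 (d : ℕ) (hd : 2 ≤ d) (L : ℝ) (hL : 0 < L)
    (S : EuclideanSpace ℝ (Fin d) → ℝ) (hS : Differentiable ℝ S)
    (hLip : ∀ x y : EuclideanSpace ℝ (Fin d),
      ‖gradient S x - gradient S y‖ ≤ L * ‖x - y‖)
    (xt : EuclideanSpace ℝ (Fin d)) (hxt : S xt = 0) (hgrad : gradient S xt ≠ 0)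
    (v₁ : EuclideanSpace ℝ (Fin d)) (hv₁ : v₁ = ‖gradient S xt‖⁻¹ • gradient S xt)
    (c : ℝ) (hc : c = ∫ u, |⟪v₁, u⟫| ∂(sphereUniform d))
    (q : ℝ → ℝ)
    (hq : ∀ δ : ℝ, q δ =
      ((sphereUniform d) {u | |⟪gradient S xt, u⟫| ≤ L * δ / 2}).toReal)
    (δ : ℝ) (hδ : 0 < δ) :
    ‖gEst d S xt δ - c • v₁‖ ≤ 3 * q δ := by
  classical
  set σ : Measure (EuclideanSpace ℝ (Fin d)) := sphereUniform d with hσ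
  set g : EuclideanSpace ℝ (Fin d) := gradient S xt with hgdef
  have hgnorm : 0 < ‖g‖ := norm_pos_iff.mpr hgrad
  -- σ is a finite measure
  haveI hfin : IsFiniteMeasure σ := by
    constructor
    rw [hσ]
    simp only [sphereUniform, Measure.smul_apply, Measure.restrict_apply_univ, smul_eq_mul]
    exact lt_of_le_of_lt (ENNReal.inv_mul_le_one _) ENNReal.one_lt_top
  -- almost every point of σ lies on the sphere
  have hae : ∀ᵐ u ∂σ, u ∈ sphere (0 : EuclideanSpace ℝ (Fin d)) 1 := by
    rw [ae_iff]
    have hset : {u : EuclideanSpace ℝ (Fin d) | ¬ u ∈ sphere (0 : EuclideanSpace ℝ (Fin d)) 1}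
        = (sphere (0 : EuclideanSpace ℝ (Fin d)) 1)ᶜ := rfl
    rw [hset, hσ]
    have hsph : MeasurableSet (sphere (0 : EuclideanSpace ℝ (Fin d)) 1) :=
      isClosed_sphere.measurableSet
    simp only [sphereUniform, Measure.smul_apply,
      Measure.restrict_apply hsph.compl, Set.compl_inter_self,
      measure_empty, smul_eq_mul, mul_zero]
  -- sgn facts
  have hsgnm : Measurable sgn := by
    unfold sgn
    exact Measurable.ite (measurableSet_lt measurable_const measurable_id)
      measurable_const measurable_const
  have hsgn_abs : ∀ t : ℝ, |sgn t| ≤ 1 := by intro t; unfold sgn; split_ifs <;> simp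
  have hsgn_mul : ∀ t : ℝ, sgn t * t = |t| := by
    intro t; unfold sgn; split_ifs with h
    · rw [one_mul, abs_of_pos h]
    · rw [neg_one_mul, abs_of_nonpos (not_lt.mp h)]
  have hv1norm : ‖v₁‖ = 1 := by
    rw [hv₁, norm_smul, Real.norm_eq_abs, abs_of_pos (inv_pos.mpr hgnorm)]
    field_simp
  have hsgn_eq : ∀ u : EuclideanSpace ℝ (Fin d), sgn ⟪g, u⟫ = sgn ⟪v₁, u⟫ := by
    intro u
    have hiv : ⟪v₁, u⟫ = ‖g‖⁻¹ * ⟪g, u⟫ := by rw [hv₁, real_inner_smul_left]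
    have hiff : (0 < ⟪g, u⟫) ↔ (0 < ⟪v₁, u⟫) := by
      rw [hiv]
      constructor
      · intro h; exact mul_pos (inv_pos.mpr hgnorm) h
      · intro h; nlinarith [inv_pos.mpr hgnorm]
    unfold sgn
    rw [if_congr hiff rfl rfl]
  have hcont_inner : Continuous fun u : EuclideanSpace ℝ (Fin d) => ⟪v₁, u⟫ :=
    continuous_const.inner continuous_id
  have hcont_innerg : Continuous fun u : EuclideanSpace ℝ (Fin d) => ⟪g, u⟫ :=
    continuous_const.inner continuous_id
  -- the reflection across the line spanned by v₁
  set R : EuclideanSpace ℝ (Fin d) ≃ₗᵢ[ℝ] EuclideanSpace ℝ (Fin d) :=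
    Submodule.reflection (ℝ ∙ v₁) with hRdef
  have hRapp : ∀ u, R u = (2 * ⟪v₁, u⟫) • v₁ - u := by
    intro u
    rw [hRdef, Submodule.reflection_apply, Submodule.starProjection_singleton ℝ u, hv1norm]
    norm_num [two_smul, two_mul, add_smul]
  have hinnerR : ∀ u, ⟪v₁, R u⟫ = ⟪v₁, u⟫ := by
    intro u
    rw [hRapp, inner_sub_right, real_inner_smul_right, real_inner_self_eq_norm_sq, hv1norm]
    ring
  set F : EuclideanSpace ℝ (Fin d) → EuclideanSpace ℝ (Fin d) :=
    fun u => sgn ⟪v₁, u⟫ • (u - ⟪v₁, u⟫ • v₁) with hFdef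
  have hFodd : ∀ u, F (R u) = -F u := by
    intro u
    show sgn ⟪v₁, R u⟫ • (R u - ⟪v₁, R u⟫ • v₁) = -(sgn ⟪v₁, u⟫ • (u - ⟪v₁, u⟫ • v₁))
    rw [hinnerR u, hRapp u, ← smul_neg]
    congr 1
    rw [two_mul, add_smul]
    abel
  have hRm : Measurable (R : EuclideanSpace ℝ (Fin d) → EuclideanSpace ℝ (Fin d)) :=
    R.continuous.measurable
  have hpre : (R : EuclideanSpace ℝ (Fin d) → EuclideanSpace ℝ (Fin d)) ⁻¹'
      sphere (0 : EuclideanSpace ℝ (Fin d)) 1 = sphere (0 : EuclideanSpace ℝ (Fin d)) 1 := by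
    ext u
    simp [mem_sphere_zero_iff_norm]
  have hmapH : Measure.map (R : EuclideanSpace ℝ (Fin d) → EuclideanSpace ℝ (Fin d))
      (μH[(d : ℝ) - 1] : Measure (EuclideanSpace ℝ (Fin d))) = μH[(d : ℝ) - 1] := by
    rw [R.isometry.map_hausdorffMeasure (Or.inr R.surjective),
      R.surjective.range_eq, Measure.restrict_univ]
  have hmap : Measure.map (R : EuclideanSpace ℝ (Fin d) → EuclideanSpace ℝ (Fin d)) σ = σ := by
    rw [hσ]
    simp only [sphereUniform]
    rw [Measure.map_smul]
    congr 1
    conv_lhs => rw [← hpre]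
    rw [← Measure.restrict_map hRm isClosed_sphere.measurableSet, hmapH]
  have hFm : Measurable F := by
    apply Measurable.fun_smul
    · exact hsgnm.comp hcont_inner.measurable
    · exact (continuous_id.sub (hcont_inner.smul continuous_const)).measurable
  have hFint : Integrable F σ := by
    refine ⟨hFm.aestronglyMeasurable, HasFiniteIntegral.of_bounded (C := 2) ?_⟩
    filter_upwards [hae] with u hu
    have hu1 : ‖u‖ = 1 := by simpa [mem_sphere_zero_iff_norm] using hu
    have h2 : ‖u - ⟪v₁, u⟫ • v₁‖ ≤ 2 := by
      calc ‖u - ⟪v₁, u⟫ • v₁‖ ≤ ‖u‖ + ‖⟪v₁, u⟫ • v₁‖ := norm_sub_le _ _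
        _ = 1 + |⟪v₁, u⟫| * ‖v₁‖ := by rw [hu1, norm_smul, Real.norm_eq_abs]
        _ ≤ 1 + (‖v₁‖ * ‖u‖) * ‖v₁‖ := by
            gcongr
            exact abs_real_inner_le_norm _ _
        _ = 2 := by rw [hv1norm, hu1]; ring
    calc ‖F u‖ = |sgn ⟪v₁, u⟫| * ‖u - ⟪v₁, u⟫ • v₁‖ := by
          simp [hFdef, norm_smul]
      _ ≤ 1 * 2 := mul_le_mul (hsgn_abs _) h2 (norm_nonneg _) zero_le_one
      _ = 2 := one_mul 2
  have hF0 : ∫ u, F u ∂σ = 0 := by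
    have hchg : ∫ u, F u ∂σ = ∫ u, F (R u) ∂σ := by
      have h := integral_map (μ := σ) hRm.aemeasurable (f := F)
        (by rw [hmap]; exact hFm.aestronglyMeasurable)
      rw [hmap] at h
      exact h
    have hne : ∫ u, F u ∂σ = - ∫ u, F u ∂σ := by
      conv_lhs => rw [hchg]
      simp only [hFodd]
      exact integral_neg F
    have h2 : ∫ u, F u ∂σ + ∫ u, F u ∂σ = 0 := by
      nth_rewrite 2 [hne]; simp
    rw [← two_smul ℝ] at h2
    exact (smul_eq_zero.mp h2).resolve_left (by norm_num)
  -- measurable pieces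
  set A : Set (EuclideanSpace ℝ (Fin d)) := {u | |⟪g, u⟫| ≤ L * δ / 2} with hA_def
  have hAmeas : MeasurableSet A :=
    measurableSet_le hcont_innerg.abs.measurable measurable_const
  set f : EuclideanSpace ℝ (Fin d) → ℝ := fun u => sgn (S (xt + δ • u)) with hfdef
  set h : EuclideanSpace ℝ (Fin d) → ℝ := fun u => sgn ⟪g, u⟫ with hhdef
  have hfm : Measurable f := hsgnm.comp
    ((hS.continuous.comp (continuous_const.add (continuous_id.const_smul δ))).measurable)
  have hhm : Measurable h := hsgnm.comp hcont_innerg.measurable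
  have bdd_int : ∀ (φ : EuclideanSpace ℝ (Fin d) → ℝ), Measurable φ → (∀ t, |φ t| ≤ 1) →
      Integrable (fun u => φ u • u) σ := by
    intro φ hφm hφb
    refine ⟨(hφm.smul measurable_id).aestronglyMeasurable,
      HasFiniteIntegral.of_bounded (C := 1) ?_⟩
    filter_upwards [hae] with u hu
    have hu1 : ‖u‖ = 1 := by simpa [mem_sphere_zero_iff_norm] using hu
    rw [norm_smul, Real.norm_eq_abs, hu1, mul_one]
    exact hφb u
  have hIf : Integrable (fun u => f u • u) σ := bdd_int f hfm (fun t => hsgn_abs _)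
  have hIh : Integrable (fun u => h u • u) σ := bdd_int h hhm (fun t => hsgn_abs _)
  -- the key identity: ∫ h u • u = c • v₁
  have hIabs : Integrable (fun u => |⟪v₁, u⟫| • v₁) σ := by
    refine ⟨(hcont_inner.abs.smul continuous_const).measurable.aestronglyMeasurable,
      HasFiniteIntegral.of_bounded (C := 1) ?_⟩
    filter_upwards [hae] with u hu
    have hu1 : ‖u‖ = 1 := by simpa [mem_sphere_zero_iff_norm] using hu
    rw [norm_smul, Real.norm_eq_abs, abs_abs, hv1norm, mul_one]
    calc |⟪v₁, u⟫| ≤ ‖v₁‖ * ‖u‖ := abs_real_inner_le_norm _ _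
      _ = 1 := by rw [hv1norm, hu1, mul_one]
  have hptw : ∀ u, h u • u = |⟪v₁, u⟫| • v₁ + F u := by
    intro u
    have hs : sgn ⟪v₁, u⟫ • (⟪v₁, u⟫ • v₁) = |⟪v₁, u⟫| • v₁ := by
      rw [smul_smul, hsgn_mul]
    simp only [hhdef, hFdef, hsgn_eq u]
    rw [smul_sub, hs]
    abel
  have hA' : ∫ u, h u • u ∂σ = c • v₁ := by
    calc ∫ u, h u • u ∂σ = ∫ u, (|⟪v₁, u⟫| • v₁ + F u) ∂σ := by simp_rw [hptw]
      _ = (∫ u, |⟪v₁, u⟫| ∂σ) • v₁ + ∫ u, F u ∂σ := by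
          rw [integral_add hIabs hFint, integral_smul_const]
      _ = c • v₁ := by rw [hF0, add_zero, hc, hσ]
  -- main estimate
  have hsub : gEst d S xt δ - c • v₁ = ∫ u, (f u - h u) • u ∂σ := by
    have hgE : gEst d S xt δ = ∫ u, f u • u ∂σ := rfl
    rw [hgE, ← hA', ← integral_sub hIf hIh]
    simp_rw [sub_smul]
  rw [hsub]
  calc ‖∫ u, (f u - h u) • u ∂σ‖ ≤ ∫ u, ‖(f u - h u) • u‖ ∂σ :=
        norm_integral_le_integral_norm _
    _ ≤ ∫ u, A.indicator (fun _ => (2 : ℝ)) u ∂σ := by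
        have hInorm : Integrable (fun u => ‖(f u - h u) • u‖) σ := by
          have := (hIf.sub hIh).norm
          simpa [Pi.sub_apply, sub_smul] using this
        apply integral_mono_ae hInorm ((integrable_const (2:ℝ)).indicator hAmeas)
        filter_upwards [hae] with u hu
        have hu1 : ‖u‖ = 1 := by simpa [mem_sphere_zero_iff_norm] using hu
        by_cases hmem : u ∈ A
        · rw [Set.indicator_of_mem hmem]
          rw [norm_smul, hu1, mul_one, Real.norm_eq_abs]
          calc |f u - h u| ≤ |f u| + |h u| := abs_sub _ _
            _ ≤ 1 + 1 := add_le_add (hsgn_abs _) (hsgn_abs _)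
            _ = 2 := by norm_num
        · rw [Set.indicator_of_notMem hmem]
          have hgt : L * δ / 2 < |⟪g, u⟫| := lt_of_not_ge (by simpa [hA_def] using hmem)
          have heq : f u = h u := sgn_agree S hS L hLip xt hxt u hu1 δ hδ hgt
          rw [heq]
          simp
    _ = 2 * q δ := by
        rw [integral_indicator_const (2 : ℝ) hAmeas, hq δ, smul_eq_mul, mul_comm, measureReal_def]
    _ ≤ 3 * q δ := by
        have hq0 : 0 ≤ q δ := by rw [hq δ]; exact ENNReal.toReal_nonneg
        linarith
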